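/- arXiv:math/0405005 — 3 statements merged into one kernel-verified Lean document; each statement's English description precedes it below -/
import Mathlib

section
/- Let H be a Hopf algebra with bijective antipode, M an algebra and a left H-comodule, π: H → M a surjective algebra homomorphism such that the action h·m := π(h)m makes M a left-left anti-Yetter-Drinfeld module, and assume π(1⁽⁻¹⁾)1⁽⁰⁾ = 1 (where 1⁽⁻¹⁾⊗1⁽⁰⁾ is the coaction applied to the unit of M). Then M is stable: m⁽⁻¹⁾·m⁽⁰⁾ = m for all m ∈ M. -/
open TensorProduct LinearMap Coalgebra

noncomputable section

variable (k : Type) [Field k] (H : Type) [Ring H] [HopfAlgebra k H]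
variable (M : Type) [Ring M] [Algebra k M]

/-- The right-hand side `h⁽¹⁾m⁽⁻¹⁾S⁻¹(h⁽³⁾) ⊗ h⁽²⁾m⁽⁰⁾` of the left-left
anti-Yetter-Drinfeld condition, as a linear map `H ⊗ M → H ⊗ M`, where `Sinv` plays
the role of the inverse of the antipode. -/
def aydRHSll (Sinv : H →ₗ[k] H) (act : H ⊗[k] M →ₗ[k] M)
    (coact : M →ₗ[k] H ⊗[k] M) : H ⊗[k] M →ₗ[k] H ⊗[k] M :=
  map (mul' k H ∘ₗ map (mul' k H) Sinv) act
    ∘ₗ (TensorProduct.assoc k (H ⊗[k] H) H (H ⊗[k] M)).symm.toLinearMap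
    ∘ₗ map LinearMap.id
        ((TensorProduct.leftComm k H H M).toLinearMap
          ∘ₗ (TensorProduct.assoc k H H M).toLinearMap)
    ∘ₗ (tensorTensorTensorComm k H (H ⊗[k] H) H M).toLinearMap
    ∘ₗ map (map LinearMap.id comul ∘ₗ comul) coact

/-- The left-left anti-Yetter-Drinfeld condition:
`Δ_M(h·m) = h⁽¹⁾m⁽⁻¹⁾S⁻¹(h⁽³⁾) ⊗ h⁽²⁾m⁽⁰⁾`. -/
def IsAYDll (Sinv : H →ₗ[k] H) (act : H ⊗[k] M →ₗ[k] M)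
    (coact : M →ₗ[k] H ⊗[k] M) : Prop :=
  coact ∘ₗ act = aydRHSll k H M Sinv act coact

namespace Statement10Aux

variable {k : Type} [Field k]

section Conv
variable {C L : Type} [AddCommGroup C] [Module k C] [Coalgebra k C] [Ring L] [Algebra k L]

/-- Convolution product on `Hom(C, L)`. -/
def convp (f g : C →ₗ[k] L) : C →ₗ[k] L :=
  mul' k L ∘ₗ map f g ∘ₗ comul

lemma convp_repr (f g : C →ₗ[k] L) {c : C} {ι : Type*} (r : Coalgebra.Repr k c ι) :
    convp f g c = ∑ i ∈ r.index, f (r.left i) * g (r.right i) := by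
  simp only [convp, LinearMap.comp_apply, ← r.eq, map_sum, TensorProduct.map_tmul,
    LinearMap.mul'_apply]

/-- Convolution unit. -/
def convUnit : C →ₗ[k] L := Algebra.linearMap k L ∘ₗ counit

lemma convp_unit_left (f : C →ₗ[k] L) : convp convUnit f = f := by
  ext c
  rw [convp_repr _ _ (ℛ k c)]
  have h := congrArg (TensorProduct.lid k L)
    (Coalgebra.sum_counit_tmul_map_eq (R := k) f c (repr := ℛ k c))
  simp only [map_sum, TensorProduct.lid_tmul, one_smul] at h
  simpa [convUnit, Algebra.smul_def] using h

lemma convp_unit_right (f : C →ₗ[k] L) : convp f convUnit = f := by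
  ext c
  rw [convp_repr _ _ (ℛ k c)]
  have h := congrArg (TensorProduct.rid k L)
    (Coalgebra.sum_map_tmul_counit_eq (R := k) f c (repr := ℛ k c))
  simp only [map_sum, TensorProduct.rid_tmul, one_smul] at h
  calc ∑ i ∈ (ℛ k c).index, f ((ℛ k c).left i) * convUnit ((ℛ k c).right i)
      = ∑ i ∈ (ℛ k c).index, counit (R := k) ((ℛ k c).right i) • f ((ℛ k c).left i) := by
        refine Finset.sum_congr rfl fun i _ => ?_
        rw [convUnit]
        simp [Algebra.smul_def, Algebra.commutes]
    _ = f c := h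

lemma convp_assoc (f g h : C →ₗ[k] L) : convp (convp f g) h = convp f (convp g h) := by
  ext c
  set r := ℛ k c with hr
  have key := congrArg (mul' k L ∘ₗ map f (mul' k L ∘ₗ map g h))
    (Coalgebra.sum_tmul_tmul_eq (R := k) r (fun i => ℛ k (r.left i)) (fun i => ℛ k (r.right i)))
  simp only [map_sum, LinearMap.comp_apply, TensorProduct.map_tmul, LinearMap.mul'_apply] at key
  rw [convp_repr _ _ r, convp_repr _ _ r]
  calc ∑ i ∈ r.index, convp f g (r.left i) * h (r.right i)
      = ∑ i ∈ r.index, ∑ j ∈ (ℛ k (r.left i)).index,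
          f ((ℛ k (r.left i)).left j) * ((ℛ k (r.left i)).right j |> g) * h (r.right i) := by
        refine Finset.sum_congr rfl fun i _ => ?_
        rw [convp_repr _ _ (ℛ k (r.left i)), Finset.sum_mul]
    _ = ∑ i ∈ r.index, ∑ j ∈ (ℛ k (r.left i)).index,
          f ((ℛ k (r.left i)).left j) * (g ((ℛ k (r.left i)).right j) * h (r.right i)) := by
        simp [mul_assoc]
    _ = ∑ i ∈ r.index, ∑ j ∈ (ℛ k (r.right i)).index,
          f (r.left i) * (g ((ℛ k (r.right i)).left j) * h ((ℛ k (r.right i)).right j)) := key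
    _ = ∑ i ∈ r.index, f (r.left i) * convp g h (r.right i) := by
        refine Finset.sum_congr rfl fun i _ => ?_
        rw [convp_repr _ _ (ℛ k (r.right i)), Finset.mul_sum]

end Conv

section Antipode
variable {H : Type} [Ring H] [HopfAlgebra k H]

/-- A representation of `comul (a ⊗ₜ b)` from representations of `comul a`, `comul b`. -/
def tensorRepr {a b : H} {ι κ : Type*} (ra : Coalgebra.Repr k a ι) (rb : Coalgebra.Repr k b κ) :
    Coalgebra.Repr k (a ⊗ₜ[k] b) (ι × κ) where
  index := ra.index ×ˢ rb.index
  left := fun p => ra.left p.1 ⊗ₜ[k] rb.left p.2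
  right := fun p => ra.right p.1 ⊗ₜ[k] rb.right p.2
  eq := by
    have : CoalgebraStruct.comul (R := k) (a ⊗ₜ[k] b) =
        (TensorProduct.tensorTensorTensorComm k H H H H ∘ₗ
          TensorProduct.map comul comul) (a ⊗ₜ[k] b) := rfl
    rw [this, Finset.sum_product, LinearMap.comp_apply, TensorProduct.map_tmul,
      ← ra.eq, ← rb.eq]
    simp only [TensorProduct.sum_tmul, TensorProduct.tmul_sum, map_sum,
      TensorProduct.tensorTensorTensorComm_tmul, LinearEquiv.coe_coe]
    rw [Finset.sum_comm]

local notation "S" => HopfAlgebra.antipode (R := k) (A := H)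

def antipodeMul : H ⊗[k] H →ₗ[k] H := S ∘ₗ mul' k H

def mulAntipode : H ⊗[k] H →ₗ[k] H :=
  mul' k H ∘ₗ map S S ∘ₗ (TensorProduct.comm k H H).toLinearMap

lemma convp_mul_antipodeMul : convp (mul' k H) antipodeMul = (convUnit : H ⊗[k] H →ₗ[k] H) := by
  apply TensorProduct.ext'
  intro a b
  set ra := ℛ k a
  set rb := ℛ k b
  rw [convp_repr _ _ (tensorRepr ra rb)]
  have hcm : ∑ p ∈ ra.index ×ˢ rb.index,
      (ra.left p.1 * rb.left p.2) ⊗ₜ[k] (ra.right p.1 * rb.right p.2) = comul (a * b) := by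
    rw [Bialgebra.comul_mul, ← ra.eq, ← rb.eq, Finset.sum_mul_sum]
    simp [Finset.sum_product, Algebra.TensorProduct.tmul_mul_tmul]
  have key := congrArg (mul' k H ∘ₗ (HopfAlgebra.antipode (R := k)).lTensor H) hcm
  simp only [map_sum, LinearMap.comp_apply, lTensor_tmul, mul'_apply,
    HopfAlgebra.mul_antipode_lTensor_comul_apply] at key
  calc ∑ p ∈ ra.index ×ˢ rb.index,
      mul' k H ((tensorRepr ra rb).left p) * antipodeMul ((tensorRepr ra rb).right p)
      = ∑ p ∈ ra.index ×ˢ rb.index,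
        (ra.left p.1 * rb.left p.2) * S (ra.right p.1 * rb.right p.2) := by
        refine Finset.sum_congr rfl fun p _ => ?_
        simp [tensorRepr, antipodeMul]
    _ = algebraMap k H (counit (a * b)) := key
    _ = convUnit (a ⊗ₜ[k] b) := by
        simp [convUnit, Bialgebra.counit_mul, mul_comm]

set_option maxHeartbeats 1000000 in
lemma convp_mulAntipode_mul : convp mulAntipode (mul' k H) = (convUnit : H ⊗[k] H →ₗ[k] H) := by
  apply TensorProduct.ext'
  intro a b
  set ra := ℛ k a
  set rb := ℛ k b
  rw [convp_repr _ _ (tensorRepr ra rb)]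
  calc ∑ p ∈ ra.index ×ˢ rb.index,
      mulAntipode ((tensorRepr ra rb).left p) * mul' k H ((tensorRepr ra rb).right p)
      = ∑ j ∈ rb.index, S (rb.left j) *
          ((∑ i ∈ ra.index, S (ra.left i) * ra.right i) * rb.right j) := by
        rw [Finset.sum_product_right]
        refine Finset.sum_congr rfl fun j _ => ?_
        rw [Finset.sum_mul, Finset.mul_sum]
        refine Finset.sum_congr rfl fun i _ => ?_
        simp only [tensorRepr, mulAntipode, LinearMap.comp_apply,
          LinearEquiv.coe_coe, TensorProduct.comm_tmul, TensorProduct.map_tmul, mul'_apply]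
        noncomm_ring
    _ = convUnit (a ⊗ₜ[k] b) := by
        rw [HopfAlgebra.sum_antipode_mul_eq_algebraMap_counit ra]
        have : ∑ j ∈ rb.index, S (rb.left j) * (algebraMap k H (counit a) * rb.right j)
            = algebraMap k H (counit a) * ∑ j ∈ rb.index, S (rb.left j) * rb.right j := by
          rw [Finset.mul_sum]
          refine Finset.sum_congr rfl fun j _ => ?_
          rw [← mul_assoc, ← Algebra.commutes, mul_assoc]
        rw [this, HopfAlgebra.sum_antipode_mul_eq_algebraMap_counit rb]
        simp [convUnit, ← map_mul, mul_comm]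

lemma antipodeMul_eq_mulAntipode :
    (antipodeMul : H ⊗[k] H →ₗ[k] H) = mulAntipode := by
  have h1 : convp (mul' k H) (antipodeMul : H ⊗[k] H →ₗ[k] H) = convUnit :=
    convp_mul_antipodeMul
  have h2 : convp (mulAntipode : H ⊗[k] H →ₗ[k] H) (mul' k H) = convUnit :=
    convp_mulAntipode_mul
  have h3 := convp_assoc (mulAntipode : H ⊗[k] H →ₗ[k] H) (mul' k H) antipodeMul
  rw [h2, h1, convp_unit_left, convp_unit_right] at h3
  exact h3

lemma antipode_mul_anti (a b : H) : S (a * b) = S b * S a := by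
  have := congrArg (fun f : H ⊗[k] H →ₗ[k] H => f (a ⊗ₜ[k] b)) antipodeMul_eq_mulAntipode
  simpa [antipodeMul, mulAntipode] using this

lemma antipode_one : S (1 : H) = 1 := by
  have := HopfAlgebra.mul_antipode_rTensor_comul_apply (R := k) (A := H) 1
  simpa [Bialgebra.comul_one, Algebra.TensorProduct.one_def] using this

end Antipode


variable {H : Type} [Ring H] [HopfAlgebra k H]

local notation "S" => HopfAlgebra.antipode (R := k) (A := H)

/-- `x ⊗ y ↦ Sinv y * x`. -/
def sinvmul (Sinv : H →ₗ[k] H) : H ⊗[k] H →ₗ[k] H :=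
  mul' k H ∘ₗ map Sinv LinearMap.id ∘ₗ (TensorProduct.comm k H H).toLinearMap

lemma sinvmul_comul (Sinv : H →ₗ[k] H)
    (hSinv1 : Sinv ∘ₗ HopfAlgebra.antipode (R := k) = LinearMap.id)
    (hSinv2 : HopfAlgebra.antipode (R := k) ∘ₗ Sinv = LinearMap.id) :
    sinvmul Sinv ∘ₗ comul = Algebra.linearMap k H ∘ₗ counit := by
  have hli : Function.LeftInverse Sinv (S : H →ₗ[k] H) := fun x => LinearMap.congr_fun hSinv1 x
  have hinj : Function.Injective (S : H →ₗ[k] H) := hli.injective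
  have hcomp : (S : H →ₗ[k] H) ∘ₗ sinvmul Sinv =
      mul' k H ∘ₗ (HopfAlgebra.antipode (R := k)).rTensor H := by
    apply TensorProduct.ext'
    intro x y
    simp only [sinvmul, LinearMap.comp_apply, LinearEquiv.coe_coe, TensorProduct.comm_tmul,
      TensorProduct.map_tmul, mul'_apply, rTensor_tmul, LinearMap.id_coe, id_eq]
    have h2y : S (Sinv y) = y := LinearMap.congr_fun hSinv2 y
    rw [antipode_mul_anti, h2y]
  ext h
  apply hinj
  have := LinearMap.congr_fun hcomp (comul h)
  simp only [LinearMap.comp_apply] at this ⊢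
  rw [this, HopfAlgebra.mul_antipode_rTensor_comul_apply]
  simp [Algebra.algebraMap_eq_smul_one, antipode_one]

variable {M : Type} [Ring M] [Algebra k M]


lemma prefix_eq (Sinv : H →ₗ[k] H) (π : H →ₐ[k] M) :
    (mul' k M ∘ₗ map π.toLinearMap LinearMap.id) ∘ₗ
      (map (mul' k H ∘ₗ map (mul' k H) Sinv) (mul' k M ∘ₗ map π.toLinearMap LinearMap.id)
        ∘ₗ (TensorProduct.assoc k (H ⊗[k] H) H (H ⊗[k] M)).symm.toLinearMap
        ∘ₗ map LinearMap.id
            ((TensorProduct.leftComm k H H M).toLinearMap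
              ∘ₗ (TensorProduct.assoc k H H M).toLinearMap)
        ∘ₗ (tensorTensorTensorComm k H (H ⊗[k] H) H M).toLinearMap)
    = (mul' k M ∘ₗ map π.toLinearMap
          (mul' k M ∘ₗ map π.toLinearMap (mul' k M ∘ₗ map π.toLinearMap LinearMap.id))
        ∘ₗ lTensor H (TensorProduct.leftComm k H H M).toLinearMap
        ∘ₗ (TensorProduct.assoc k H H (H ⊗[k] M)).toLinearMap)
      ∘ₗ map (lTensor H (sinvmul Sinv)) LinearMap.id := by
  ext x y z a m
  simp only [sinvmul, AlgebraTensorModule.curry_apply, TensorProduct.curry_apply,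
    LinearMap.coe_restrictScalars, LinearMap.comp_apply, TensorProduct.map_tmul,
    LinearMap.id_coe, id_eq, LinearEquiv.coe_coe, TensorProduct.tensorTensorTensorComm_tmul,
    TensorProduct.assoc_tmul, TensorProduct.leftComm_tmul, TensorProduct.assoc_symm_tmul,
    mul'_apply, lTensor_tmul, TensorProduct.comm_tmul, AlgHom.toLinearMap_apply, map_mul]
  noncomm_ring

lemma contract_comul (Sinv : H →ₗ[k] H)
    (hA : sinvmul Sinv ∘ₗ comul = Algebra.linearMap k H ∘ₗ counit) :
    lTensor H (sinvmul Sinv) ∘ₗ (map LinearMap.id comul ∘ₗ comul) =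
      (TensorProduct.mk k H H).flip 1 := by
  have h1 : (map LinearMap.id comul : H ⊗[k] H →ₗ[k] H ⊗[k] (H ⊗[k] H)) =
      lTensor H comul := rfl
  rw [h1, ← LinearMap.comp_assoc, ← lTensor_comp, hA, lTensor_comp, LinearMap.comp_assoc,
    Coalgebra.lTensor_counit_comp_comul]
  ext h
  simp


lemma mkone_eq (π : H →ₐ[k] M) :
    (mul' k M ∘ₗ map π.toLinearMap
        (mul' k M ∘ₗ map π.toLinearMap (mul' k M ∘ₗ map π.toLinearMap LinearMap.id))
      ∘ₗ lTensor H (TensorProduct.leftComm k H H M).toLinearMap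
      ∘ₗ (TensorProduct.assoc k H H (H ⊗[k] M)).toLinearMap)
    ∘ₗ map ((TensorProduct.mk k H H).flip 1) LinearMap.id
    = mul' k M ∘ₗ map π.toLinearMap (mul' k M ∘ₗ map π.toLinearMap LinearMap.id) := by
  ext h a m
  simp only [AlgebraTensorModule.curry_apply, TensorProduct.curry_apply,
    LinearMap.coe_restrictScalars, LinearMap.comp_apply, TensorProduct.map_tmul,
    LinearMap.flip_apply, TensorProduct.mk_apply, LinearMap.id_coe, id_eq,
    LinearEquiv.coe_coe, TensorProduct.assoc_tmul, lTensor_tmul,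
    TensorProduct.leftComm_tmul, mul'_apply, AlgHom.toLinearMap_apply, map_one, one_mul]

end Statement10Aux

theorem statement10
    (Sinv : H →ₗ[k] H)
    (hSinv1 : Sinv ∘ₗ HopfAlgebra.antipode (R := k) = LinearMap.id)
    (hSinv2 : HopfAlgebra.antipode (R := k) ∘ₗ Sinv = LinearMap.id)
    -- `M` is a left `H`-comodule
    (coact : M →ₗ[k] H ⊗[k] M)
    (hcoassoc : map LinearMap.id coact ∘ₗ coact =
      (TensorProduct.assoc k H H M).toLinearMap ∘ₗ map comul LinearMap.id ∘ₗ coact)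
    (hcounit : (TensorProduct.lid k M).toLinearMap
        ∘ₗ map (counit (R := k) (A := H)) LinearMap.id ∘ₗ coact = LinearMap.id)
    -- `π : H → M` is a surjective algebra homomorphism
    (π : H →ₐ[k] M) (hπ : Function.Surjective π)
    -- the action `h·m = π(h)m` makes `M` an anti-Yetter-Drinfeld module
    (hayd : IsAYDll k H M Sinv
      (mul' k M ∘ₗ map π.toLinearMap LinearMap.id) coact)
    -- `π(1⁽⁻¹⁾)1⁽⁰⁾ = 1`
    (hone : (mul' k M ∘ₗ map π.toLinearMap LinearMap.id) (coact (1 : M)) = (1 : M)) :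
    -- then `M` is stable
    (mul' k M ∘ₗ map π.toLinearMap LinearMap.id) ∘ₗ coact = LinearMap.id := by
  have hA := Statement10Aux.sinvmul_comul Sinv hSinv1 hSinv2
  have hpre := Statement10Aux.prefix_eq (M := M) Sinv π
  have hcon := Statement10Aux.contract_comul (H := H) Sinv hA
  have hE := Statement10Aux.mkone_eq (H := H) (M := M) π
  have hayd' : coact ∘ₗ (mul' k M ∘ₗ map π.toLinearMap LinearMap.id) =
      aydRHSll k H M Sinv (mul' k M ∘ₗ map π.toLinearMap LinearMap.id) coact := hayd
  apply LinearMap.ext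
  intro m
  obtain ⟨h, hh⟩ := hπ m
  have hact : (mul' k M ∘ₗ map π.toLinearMap LinearMap.id) (h ⊗ₜ[k] (1 : M)) = m := by
    simp only [LinearMap.comp_apply, TensorProduct.map_tmul, LinearMap.id_coe, id_eq,
      mul'_apply, AlgHom.toLinearMap_apply, mul_one, hh]
  have h1 : coact m = aydRHSll k H M Sinv
      (mul' k M ∘ₗ map π.toLinearMap LinearMap.id) coact (h ⊗ₜ[k] (1 : M)) := by
    conv_lhs => rw [← hact]
    exact LinearMap.congr_fun hayd' (h ⊗ₜ[k] (1 : M))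
  simp only [LinearMap.comp_apply, LinearMap.id_coe, id_eq]
  rw [h1]
  -- unfold the outer layer of `aydRHSll` at `h ⊗ₜ 1`
  have e0 : aydRHSll k H M Sinv (mul' k M ∘ₗ map π.toLinearMap LinearMap.id) coact
        (h ⊗ₜ[k] (1 : M))
      = (map (mul' k H ∘ₗ map (mul' k H) Sinv) (mul' k M ∘ₗ map π.toLinearMap LinearMap.id)
          ∘ₗ (TensorProduct.assoc k (H ⊗[k] H) H (H ⊗[k] M)).symm.toLinearMap
          ∘ₗ map LinearMap.id
              ((TensorProduct.leftComm k H H M).toLinearMap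
                ∘ₗ (TensorProduct.assoc k H H M).toLinearMap)
          ∘ₗ (tensorTensorTensorComm k H (H ⊗[k] H) H M).toLinearMap)
        (((map LinearMap.id comul ∘ₗ comul) h) ⊗ₜ[k] coact (1 : M)) := by
    simp only [aydRHSll, LinearMap.comp_apply, TensorProduct.map_tmul]
  rw [e0]
  have e1 := LinearMap.congr_fun hpre
    (((map LinearMap.id comul ∘ₗ comul) h) ⊗ₜ[k] coact (1 : M))
  have e2 : map (lTensor H (Statement10Aux.sinvmul Sinv)) LinearMap.id
        ((((map LinearMap.id comul ∘ₗ comul) h) : H ⊗[k] (H ⊗[k] H)) ⊗ₜ[k] coact (1 : M))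
      = (h ⊗ₜ[k] (1 : H)) ⊗ₜ[k] coact (1 : M) := by
    have := LinearMap.congr_fun hcon h
    simp only [LinearMap.comp_apply, LinearMap.flip_apply, TensorProduct.mk_apply] at this
    simp only [TensorProduct.map_tmul, LinearMap.id_coe, id_eq, LinearMap.comp_apply, this]
  have e3 := LinearMap.congr_fun hE (h ⊗ₜ[k] coact (1 : M))
  have hone' : mul' k M (map π.toLinearMap LinearMap.id (coact (1 : M))) = 1 := hone
  simp only [LinearMap.comp_apply] at e1 e2 ⊢
  rw [e1, e2]
  simp only [LinearMap.comp_apply, TensorProduct.map_tmul, LinearMap.flip_apply,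
    TensorProduct.mk_apply, LinearMap.id_coe, id_eq, AlgHom.toLinearMap_apply,
    mul'_apply] at e3 ⊢
  rw [e3, hone', mul_one, hh]
end
end

section
/- Let B ⊆ P be a Hopf-Galois H-extension with B central in P. Then the formula p·h = (S⁻¹(h))^[2] p (S⁻¹(h))^[1], where T(h) = h^[1] ⊗_B h^[2] is the translation map, defines a right H-module structure on P. -/
open TensorProduct LinearMap Coalgebra

noncomputable section

variable (k : Type) [Field k] (H : Type) [Ring H] [HopfAlgebra k H]
-- `P` is a `k`-algebra and `B` (the coinvariants) is a commutative `k`-algebra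
-- mapping centrally into `P` (`Algebra B P` encodes that `B` is central in `P`)
variable (P : Type) [Ring P] [Algebra k P]
variable (B : Type) [CommRing B] [Algebra k B] [Algebra B P] [IsScalarTower k B P]

namespace Stmt11Aux

section Conv

variable {R : Type} [CommRing R] {C : Type} [AddCommGroup C] [Module R C] [Coalgebra R C]
variable {A : Type} [Ring A] [Algebra R A]

/-- Convolution product of linear maps from a coalgebra to an algebra. -/
def conv (f g : C →ₗ[R] A) : C →ₗ[R] A :=
  LinearMap.mul' R A ∘ₗ TensorProduct.map f g ∘ₗ Coalgebra.comul

/-- Convolution unit. -/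
def convUnit : C →ₗ[R] A := Algebra.linearMap R A ∘ₗ Coalgebra.counit

lemma conv_repr (f g : C →ₗ[R] A) {c : C} {ι : Type} (r : Coalgebra.Repr R c ι) :
    conv f g c = ∑ i ∈ r.index, f (r.left i) * g (r.right i) := by
  simp [conv, ← r.eq, map_sum]

lemma conv_unit_right (f : C →ₗ[R] A) : conv f convUnit = f := by
  ext c
  let r := ℛ R c
  have hc : ∑ i ∈ r.index, Coalgebra.counit (R := R) (r.right i) • r.left i = c := by
    have h := congrArg (TensorProduct.rid R C) (Coalgebra.sum_tmul_counit_eq r)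
    rw [map_sum] at h
    simp only [TensorProduct.rid_tmul, one_smul] at h
    exact h
  rw [conv_repr f convUnit r]
  calc ∑ i ∈ r.index, f (r.left i) * convUnit (r.right i)
      = ∑ i ∈ r.index, f (Coalgebra.counit (R := R) (r.right i) • r.left i) := by
        refine Finset.sum_congr rfl fun i _ => ?_
        simp [convUnit, ← Algebra.commutes, Algebra.smul_def]
    _ = f c := by rw [← map_sum, hc]

lemma conv_unit_left (f : C →ₗ[R] A) : conv convUnit f = f := by
  ext c
  let r := ℛ R c
  have hc : ∑ i ∈ r.index, Coalgebra.counit (R := R) (r.left i) • r.right i = c := by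
    have h := congrArg (TensorProduct.lid R C) (Coalgebra.sum_counit_tmul_eq r)
    rw [map_sum] at h
    simp only [TensorProduct.lid_tmul, one_smul] at h
    exact h
  rw [conv_repr convUnit f r]
  calc ∑ i ∈ r.index, convUnit (r.left i) * f (r.right i)
      = ∑ i ∈ r.index, f (Coalgebra.counit (R := R) (r.left i) • r.right i) := by
        refine Finset.sum_congr rfl fun i _ => ?_
        simp [convUnit, Algebra.smul_def]
    _ = f c := by rw [← map_sum, hc]

lemma conv_assoc (f g h : C →ₗ[R] A) : conv (conv f g) h = conv f (conv g h) := by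
  ext c
  let r := ℛ R c
  let r1 : (i : r.ι) → Coalgebra.Repr R (r.left i) (C × C) := fun i => ℛ R (r.left i)
  let r2 : (i : r.ι) → Coalgebra.Repr R (r.right i) (C × C) := fun i => ℛ R (r.right i)
  have key := Coalgebra.sum_map_tmul_tmul_eq (R := R) f g h c (repr := r) (a₁ := r1) (a₂ := r2)
  have key2 := congrArg (fun x => LinearMap.mul' R A ((LinearMap.lTensor A (LinearMap.mul' R A)) x)) key
  simp only [map_sum, LinearMap.lTensor_tmul, LinearMap.mul'_apply] at key2
  rw [conv_repr (conv f g) h r, conv_repr f (conv g h) r]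
  calc ∑ i ∈ r.index, conv f g (r.left i) * h (r.right i)
      = ∑ i ∈ r.index, ∑ j ∈ (r1 i).index,
          f ((r1 i).left j) * ((g ((r1 i).right j)) * h (r.right i)) := by
        refine Finset.sum_congr rfl fun i _ => ?_
        rw [conv_repr f g (r1 i), Finset.sum_mul]
        exact Finset.sum_congr rfl fun j _ => by rw [mul_assoc]
    _ = ∑ i ∈ r.index, ∑ j ∈ (r2 i).index,
          f (r.left i) * (g ((r2 i).left j) * h ((r2 i).right j)) := key2.symm
    _ = ∑ i ∈ r.index, f (r.left i) * conv g h (r.right i) := by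
        refine Finset.sum_congr rfl fun i _ => ?_
        rw [conv_repr g h (r2 i), Finset.mul_sum]

end Conv



section Antipode

variable {R : Type} [CommRing R] {A : Type} [Ring A] [HopfAlgebra R A]

/-- A `Repr` for a pure tensor in `A ⊗[R] A`, built from `Repr`s of the factors. -/
def tmulRepr {a b : A} {ι κ : Type} (ra : Coalgebra.Repr R a ι) (rb : Coalgebra.Repr R b κ) :
    Coalgebra.Repr R (a ⊗ₜ[R] b) (ι × κ) where
  index := ra.index ×ˢ rb.index
  left := fun i => ra.left i.1 ⊗ₜ[R] rb.left i.2
  right := fun i => ra.right i.1 ⊗ₜ[R] rb.right i.2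
  eq := by
    have hc : CoalgebraStruct.comul (R := R) (a ⊗ₜ[R] b) =
        TensorProduct.tensorTensorTensorComm R A A A A
          (CoalgebraStruct.comul a ⊗ₜ[R] CoalgebraStruct.comul b) := rfl
    rw [hc, ← ra.eq, ← rb.eq]
    rw [TensorProduct.sum_tmul, map_sum, Finset.sum_product]
    refine Finset.sum_congr rfl fun i _ => ?_
    rw [TensorProduct.tmul_sum, map_sum]
    exact Finset.sum_congr rfl fun j _ => by
      rw [TensorProduct.tensorTensorTensorComm_tmul]

open HopfAlgebra in
theorem antipode_mul_antidistrib (a b : A) :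
    antipode (R := R) (a * b) = antipode (R := R) b * antipode (R := R) a := by
  set F : A ⊗[R] A →ₗ[R] A := antipode (R := R) ∘ₗ LinearMap.mul' R A with hF
  set G : A ⊗[R] A →ₗ[R] A := LinearMap.mul' R A with hG
  set T : A ⊗[R] A →ₗ[R] A := LinearMap.mul' R A ∘ₗ (TensorProduct.comm R A A).toLinearMap
      ∘ₗ TensorProduct.map (antipode (R := R)) (antipode (R := R)) with hT
  have hFG : conv F G = convUnit := by
    apply TensorProduct.ext'
    intro a b
    let ra := ℛ R a
    let rb := ℛ R b
    rw [conv_repr F G (tmulRepr ra rb)]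
    have step1 : ∑ i ∈ (tmulRepr ra rb).index,
        F ((tmulRepr ra rb).left i) * G ((tmulRepr ra rb).right i)
        = LinearMap.mul' R A ((antipode (R := R)).rTensor A
            (∑ i ∈ ra.index ×ˢ rb.index,
              (ra.left i.1 * rb.left i.2) ⊗ₜ[R] (ra.right i.1 * rb.right i.2))) := by
      rw [map_sum, map_sum]
      simp only [tmulRepr]
      refine Finset.sum_congr rfl fun i _ => ?_
      simp [hF, hG]
    have step2 : (∑ i ∈ ra.index ×ˢ rb.index,
        (ra.left i.1 * rb.left i.2) ⊗ₜ[R] (ra.right i.1 * rb.right i.2))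
        = Coalgebra.comul (R := R) (a * b) := by
      rw [Bialgebra.comul_mul, ← ra.eq, ← rb.eq, Finset.sum_mul_sum]
      rw [Finset.sum_product]
      exact Finset.sum_congr rfl fun i _ => Finset.sum_congr rfl fun j _ => by
        rw [Algebra.TensorProduct.tmul_mul_tmul]
    rw [step1, step2, mul_antipode_rTensor_comul_apply, Bialgebra.counit_mul]
    simp [convUnit]
    exact Algebra.commutes _ _
  have hGT : conv G T = convUnit := by
    apply TensorProduct.ext'
    intro a b
    let ra := ℛ R a
    let rb := ℛ R b
    rw [conv_repr G T (tmulRepr ra rb)]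
    have step1 : ∑ i ∈ (tmulRepr ra rb).index,
        G ((tmulRepr ra rb).left i) * T ((tmulRepr ra rb).right i)
        = ∑ i ∈ ra.index, ra.left i *
            ((∑ j ∈ rb.index, rb.left j * antipode (R := R) (rb.right j)) *
              antipode (R := R) (ra.right i)) := by
      simp only [tmulRepr]
      rw [Finset.sum_product]
      refine Finset.sum_congr rfl fun i _ => ?_
      rw [Finset.sum_mul, Finset.mul_sum]
      refine Finset.sum_congr rfl fun j _ => ?_
      simp only [hG, hT, LinearMap.coe_comp, Function.comp_apply,
        TensorProduct.map_tmul, LinearEquiv.coe_coe, TensorProduct.comm_tmul,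
        LinearMap.mul'_apply]
      simp only [mul_assoc]
    rw [step1]
    have step2 : ∀ i ∈ ra.index, ra.left i *
        ((∑ j ∈ rb.index, rb.left j * antipode (R := R) (rb.right j)) *
          antipode (R := R) (ra.right i))
        = algebraMap R A (Coalgebra.counit b) * (ra.left i * antipode (R := R) (ra.right i)) := by
      intro i _
      rw [HopfAlgebra.sum_mul_antipode_eq_algebraMap_counit, ← mul_assoc, ← Algebra.commutes, mul_assoc]
    rw [Finset.sum_congr rfl step2, ← Finset.mul_sum, HopfAlgebra.sum_mul_antipode_eq_algebraMap_counit]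
    simp only [convUnit, ← map_mul, LinearMap.coe_comp, Function.comp_apply,
      Algebra.linearMap_apply, TensorProduct.counit_tmul, smul_eq_mul,
      TensorProduct.map_tmul, LinearMap.mul'_apply]
  have hFT : F = T := by
    calc F = conv F convUnit := (conv_unit_right F).symm
    _ = conv F (conv G T) := by rw [hGT]
    _ = conv (conv F G) T := (conv_assoc F G T).symm
    _ = conv convUnit T := by rw [hFG]
    _ = T := conv_unit_left T
  have := congrArg (fun φ : A ⊗[R] A →ₗ[R] A => φ (a ⊗ₜ[R] b)) hFT
  simpa [hF, hT, hG] using this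

open HopfAlgebra in
theorem antipode_one' : antipode (R := R) (1 : A) = 1 := by
  have h := mul_antipode_rTensor_comul_apply (R := R) (1 : A)
  rw [Bialgebra.comul_one, Bialgebra.counit_one] at h
  rw [Algebra.TensorProduct.one_def] at h
  rw [LinearMap.rTensor_tmul, LinearMap.mul'_apply, mul_one] at h
  exact h.trans (map_one (algebraMap R A))

end Antipode

end Stmt11Aux

/-- For fixed `p`, the map `x ⊗_B y ↦ y·p·x` on `P ⊗_B P`; its well-definedness
uses that `B` is central in `P`. -/
def sandwichMap (p : P) : P ⊗[B] P →ₗ[B] P :=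
  TensorProduct.lift (LinearMap.mk₂ B (fun x y => y * (p * x))
    (fun x x' y => by simp [mul_add])
    (fun b x y => by simp only [mul_smul_comm])
    (fun x y y' => by simp [add_mul])
    (fun b x y => by simp only [smul_mul_assoc]))

/-- The twisted multiplication on `P ⊗[B] P`:
`(x ⊗ y) ⊗ (x' ⊗ y') ↦ (x * x') ⊗ (y' * y)`. -/
def twMul : (P ⊗[B] P) ⊗[B] (P ⊗[B] P) →ₗ[B] P ⊗[B] P :=
  (TensorProduct.map (LinearMap.mul' B P)
      (LinearMap.mul' B P ∘ₗ (TensorProduct.comm B P P).toLinearMap))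
    ∘ₗ (TensorProduct.tensorTensorTensorComm B P P P P).toLinearMap

lemma twMul_tmul (x y x' y' : P) :
    twMul P B ((x ⊗ₜ[B] y) ⊗ₜ[B] (x' ⊗ₜ[B] y')) = (x * x') ⊗ₜ[B] (y' * y) := by
  simp [twMul]

lemma sandwichMap_tmul (p x y : P) :
    sandwichMap P B p (x ⊗ₜ[B] y) = y * (p * x) := rfl

lemma sandwichMap_add_left (p p' : P) (t : P ⊗[B] P) :
    sandwichMap P B (p + p') t = sandwichMap P B p t + sandwichMap P B p' t := by
  induction t using TensorProduct.induction_on with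
  | zero => simp
  | tmul x y => simp [sandwichMap_tmul, mul_add, add_mul]
  | add t1 t2 h1 h2 => simp only [map_add, h1, h2]; abel

lemma sandwichMap_sandwichMap (p : P) (t t' : P ⊗[B] P) :
    sandwichMap P B (sandwichMap P B p t) t'
      = sandwichMap P B p (twMul P B (t ⊗ₜ[B] t')) := by
  induction t' using TensorProduct.induction_on with
  | zero => simp [TensorProduct.tmul_zero]
  | tmul x' y' =>
    induction t using TensorProduct.induction_on with
    | zero => simp [TensorProduct.zero_tmul, sandwichMap_tmul]
    | tmul x y => simp [twMul_tmul, sandwichMap_tmul, mul_assoc]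
    | add t1 t2 h1 h2 =>
      rw [map_add, sandwichMap_add_left, h1, h2, ← map_add,
        ← map_add (twMul P B), ← TensorProduct.add_tmul]
  | add t1' t2' h1 h2 =>
    rw [map_add, h1, h2, ← map_add, ← map_add (twMul P B), ← TensorProduct.tmul_add]

theorem statement11
    (Sinv : H →ₗ[k] H)
    (hSinv1 : Sinv ∘ₗ HopfAlgebra.antipode (R := k) = LinearMap.id)
    (hSinv2 : HopfAlgebra.antipode (R := k) ∘ₗ Sinv = LinearMap.id)
    -- `ρ` makes `P` a right `H`-comodule algebra
    (ρ : P →ₐ[k] P ⊗[k] H)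
    (hcoassoc : map ρ.toLinearMap LinearMap.id ∘ₗ ρ.toLinearMap =
      (TensorProduct.assoc k P H H).symm.toLinearMap
        ∘ₗ map LinearMap.id comul ∘ₗ ρ.toLinearMap)
    (hcounit : (TensorProduct.rid k P).toLinearMap
        ∘ₗ map LinearMap.id (counit (R := k) (A := H)) ∘ₗ ρ.toLinearMap
      = LinearMap.id)
    -- `B` is (isomorphic to) the coinvariant subalgebra of `P`
    (hinj : Function.Injective (algebraMap B P))
    (hB : ∀ p : P, ρ p = p ⊗ₜ[k] (1 : H) ↔ p ∈ Set.range (algebraMap B P))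
    -- the extension `B ⊆ P` is Hopf-Galois: the canonical map is bijective
    (can : P ⊗[B] P →ₗ[B] P ⊗[k] H)
    (hcan : ∀ p p' : P, can (p ⊗ₜ[B] p') = (p ⊗ₜ[k] (1 : H)) * ρ p')
    (hbij : Function.Bijective can) :
    -- `p·h := (S⁻¹h)⁽²⁾ p (S⁻¹h)⁽¹⁾` (with `T(S⁻¹h) = can⁻¹(1 ⊗ S⁻¹h)`)
    -- defines a right `H`-module structure on `P`:
    -- (additivity in `p`)
    (∀ (p p' : P) (h : H) (t : P ⊗[B] P), can t = (1 : P) ⊗ₜ[k] Sinv h →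
      sandwichMap P B (p + p') t = sandwichMap P B p t + sandwichMap P B p' t) ∧
    -- (additivity in `h`)
    (∀ (p : P) (h h' : H) (t t' t'' : P ⊗[B] P),
      can t = (1 : P) ⊗ₜ[k] Sinv h → can t' = (1 : P) ⊗ₜ[k] Sinv h' →
      can t'' = (1 : P) ⊗ₜ[k] Sinv (h + h') →
      sandwichMap P B p t'' = sandwichMap P B p t + sandwichMap P B p t') ∧
    -- (unitality: `p·1 = p`)
    (∀ (p : P) (t : P ⊗[B] P), can t = (1 : P) ⊗ₜ[k] Sinv 1 →
      sandwichMap P B p t = p) ∧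
    -- (associativity: `(p·h)·h' = p·(hh')`)
    (∀ (p : P) (h h' : H) (t t' t'' : P ⊗[B] P),
      can t = (1 : P) ⊗ₜ[k] Sinv h → can t' = (1 : P) ⊗ₜ[k] Sinv h' →
      can t'' = (1 : P) ⊗ₜ[k] Sinv (h * h') →
      sandwichMap P B (sandwichMap P B p t) t' = sandwichMap P B p t'') := by
  -- basic consequences of the invertibility of the antipode
  have hSapp : ∀ x : H, Sinv (HopfAlgebra.antipode (R := k) x) = x := fun x =>
    LinearMap.congr_fun hSinv1 x
  have hSapp2 : ∀ x : H, HopfAlgebra.antipode (R := k) (Sinv x) = x := fun x =>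
    LinearMap.congr_fun hSinv2 x
  have hSone : Sinv (1 : H) = 1 := by
    have := hSapp (1 : H)
    rwa [Stmt11Aux.antipode_one'] at this
  have hSmul : ∀ x y : H, Sinv (x * y) = Sinv y * Sinv x := by
    intro x y
    have : HopfAlgebra.antipode (R := k) (Sinv y * Sinv x) = x * y := by
      rw [Stmt11Aux.antipode_mul_antidistrib, hSapp2, hSapp2]
    rw [← this, hSapp]
  -- the canonical map versus the twisted multiplication
  have key0 : ∀ (x y : P) (t' : P ⊗[B] P),
      can (twMul P B ((x ⊗ₜ[B] y) ⊗ₜ[B] t')) = (x ⊗ₜ[k] (1 : H)) * can t' * ρ y := by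
    intro x y t'
    induction t' using TensorProduct.induction_on with
    | zero => simp [TensorProduct.tmul_zero]
    | tmul x' y' =>
      rw [twMul_tmul, hcan, hcan, map_mul,
        show (x * x') ⊗ₜ[k] (1 : H) = (x ⊗ₜ[k] (1 : H)) * (x' ⊗ₜ[k] (1 : H)) by
          simp [Algebra.TensorProduct.tmul_mul_tmul]]
      simp only [mul_assoc]
    | add t1 t2 h1 h2 =>
      simp only [TensorProduct.tmul_add, map_add, h1, h2, mul_add, add_mul]
  have keyA : ∀ (g' : H) (t' : P ⊗[B] P), can t' = (1 : P) ⊗ₜ[k] g' →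
      ∀ t, can (twMul P B (t ⊗ₜ[B] t')) = ((1 : P) ⊗ₜ[k] g') * can t := by
    intro g' t' ht' t
    induction t using TensorProduct.induction_on with
    | zero => simp [TensorProduct.zero_tmul]
    | tmul x y =>
      rw [key0, ht', hcan]
      rw [show (x ⊗ₜ[k] (1 : H)) * ((1 : P) ⊗ₜ[k] g')
          = ((1 : P) ⊗ₜ[k] g') * (x ⊗ₜ[k] (1 : H)) by
        simp [Algebra.TensorProduct.tmul_mul_tmul], mul_assoc]
    | add t1 t2 h1 h2 =>
      simp only [TensorProduct.add_tmul, map_add, h1, h2, mul_add]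
  refine ⟨fun p p' h t _ => sandwichMap_add_left P B p p' t, ?_, ?_, ?_⟩
  · -- additivity in `h`
    intro p h h' t t' t'' ht ht' ht''
    have : t'' = t + t' := by
      apply hbij.injective
      rw [map_add, ht, ht', ht'', map_add, TensorProduct.tmul_add]
    rw [this, map_add]
  · -- unitality
    intro p t ht
    have h1 : can ((1 : P) ⊗ₜ[B] (1 : P)) = (1 : P) ⊗ₜ[k] (1 : H) := by
      rw [hcan, map_one, ← Algebra.TensorProduct.one_def, one_mul,
        Algebra.TensorProduct.one_def]
    have : t = (1 : P) ⊗ₜ[B] (1 : P) := by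
      apply hbij.injective
      rw [ht, hSone, h1]
    rw [this, sandwichMap_tmul, one_mul, mul_one]
  · -- associativity
    intro p h h' t t' t'' ht ht' ht''
    have htw : twMul P B (t ⊗ₜ[B] t') = t'' := by
      apply hbij.injective
      rw [keyA _ _ ht' t, ht, ht'', Algebra.TensorProduct.tmul_mul_tmul,
        one_mul, hSmul]
    rw [sandwichMap_sandwichMap, htw]
end
end

section
/- Let B ⊆ P be a Hopf-Galois H-extension with B central in P, and endow P with the action p·h = (S⁻¹(h))^[2] p (S⁻¹(h))^[1]. Then P is stable: p⁽⁰⁾·p⁽¹⁾ = p for all p ∈ P. -/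
open TensorProduct LinearMap Coalgebra

set_option maxHeartbeats 1000000
set_option synthInstance.maxHeartbeats 400000

noncomputable section

namespace Statement13Aux

variable {k : Type} [Field k] {H : Type} [Ring H] [HopfAlgebra k H]

open HopfAlgebra

/-- Convolution product of linear maps from a coalgebra to `H`. -/
def conv {C : Type} [AddCommGroup C] [Module k C] [CoalgebraStruct k C]
    (f g : C →ₗ[k] H) : C →ₗ[k] H :=
  LinearMap.mul' k H ∘ₗ TensorProduct.map f g ∘ₗ Coalgebra.comul

section Coalg

variable {C : Type} [AddCommGroup C] [Module k C] [Coalgebra k C]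

lemma conv_apply_repr (f g : C →ₗ[k] H) (c : C) (r : Coalgebra.Repr k c (C × C)) :
    conv f g c = ∑ i ∈ r.index, f (r.left i) * g (r.right i) := by
  simp [conv, ← r.eq, map_sum]

lemma conv_apply' (f g : C →ₗ[k] H) (c : C) :
    conv f g c = ∑ i ∈ (ℛ k c).index, f ((ℛ k c).left i) * g ((ℛ k c).right i) :=
  conv_apply_repr f g c (ℛ k c)

lemma conv_unit_left (f : C →ₗ[k] H) :
    conv (Algebra.linearMap k H ∘ₗ Coalgebra.counit) f = f := by
  ext c
  rw [conv_apply_repr _ _ c (ℛ k c)]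
  have h : ∑ i ∈ (ℛ k c).index, Coalgebra.counit (R := k) ((ℛ k c).left i) • (ℛ k c).right i
      = c := by
    have h0 := congrArg (TensorProduct.lid k C) (Coalgebra.sum_counit_tmul_eq (ℛ k c))
    rw [map_sum] at h0
    simp only [TensorProduct.lid_tmul, one_smul] at h0
    exact h0
  conv_rhs => rw [← h]
  simp [map_sum, Algebra.smul_def]

lemma conv_unit_right (f : C →ₗ[k] H) :
    conv f (Algebra.linearMap k H ∘ₗ Coalgebra.counit) = f := by
  ext c
  rw [conv_apply_repr _ _ c (ℛ k c)]
  have h : ∑ i ∈ (ℛ k c).index, Coalgebra.counit (R := k) ((ℛ k c).right i) • (ℛ k c).left i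
      = c := by
    have h0 := congrArg (TensorProduct.rid k C) (Coalgebra.sum_tmul_counit_eq (ℛ k c))
    rw [map_sum] at h0
    simp only [TensorProduct.rid_tmul, one_smul] at h0
    exact h0
  conv_rhs => rw [← h]
  simp [map_sum, Algebra.smul_def, Algebra.commutes]

lemma conv_assoc (f g h : C →ₗ[k] H) : conv (conv f g) h = conv f (conv g h) := by
  ext c
  have key := Coalgebra.sum_tmul_tmul_eq (ℛ k c)
    (fun i => ℛ k ((ℛ k c).left i)) (fun i => ℛ k ((ℛ k c).right i))
  have key2 := congrArg
    (LinearMap.mul' k H ∘ₗ TensorProduct.map f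
      (LinearMap.mul' k H ∘ₗ TensorProduct.map g h)) key
  simp only [map_sum, LinearMap.comp_apply, TensorProduct.map_tmul, LinearMap.mul'_apply] at key2
  simp only [LinearMap.comp_apply, conv_apply', Finset.sum_mul, Finset.mul_sum, mul_assoc]
  exact key2

end Coalg

section TensorCoalg

local notation "S" => HopfAlgebra.antipode (R := k) (A := H)
local notation "μ" => LinearMap.mul' k H

lemma map_mul'_ttt (x y : H ⊗[k] H) :
    TensorProduct.map (LinearMap.mul' k H) (LinearMap.mul' k H)
      (TensorProduct.tensorTensorTensorComm k H H H H (x ⊗ₜ[k] y)) = x * y := by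
  induction x using TensorProduct.induction_on with
  | zero => simp
  | tmul a b =>
    induction y using TensorProduct.induction_on with
    | zero => simp
    | tmul c d => simp [Algebra.TensorProduct.tmul_mul_tmul]
    | add u v hu hv => simp only [tmul_add, map_add, mul_add, hu, hv]
  | add u v hu hv => simp only [add_tmul, map_add, add_mul, hu, hv]

lemma comul_mul'_eq :
    TensorProduct.map (LinearMap.mul' k H) (LinearMap.mul' k H)
        ∘ₗ (Coalgebra.comul (R := k) (A := H ⊗[k] H))
      = Coalgebra.comul ∘ₗ LinearMap.mul' k H := by
  refine TensorProduct.ext' fun a b => ?_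
  simp only [LinearMap.comp_apply, TensorProduct.comul_tmul,
    TensorProduct.map_tmul, LinearMap.mul'_apply, Bialgebra.comul_mul]
  exact map_mul'_ttt _ _

lemma counit_mul'_eq :
    (Coalgebra.counit (R := k) (A := H ⊗[k] H))
      = Coalgebra.counit ∘ₗ LinearMap.mul' k H := by
  refine TensorProduct.ext' fun a b => ?_
  simp [TensorProduct.counit_tmul, mul_comm]

lemma conv_mu_left :
    conv (C := H ⊗[k] H) (HopfAlgebra.antipode (R := k) ∘ₗ LinearMap.mul' k H)
        (LinearMap.mul' k H)
      = Algebra.linearMap k H ∘ₗ Coalgebra.counit := by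
  unfold conv
  have h1 : TensorProduct.map ((S) ∘ₗ (μ)) (μ)
      = TensorProduct.map (S) LinearMap.id
          ∘ₗ TensorProduct.map (μ) (μ) := by
    rw [← TensorProduct.map_comp, LinearMap.id_comp]
  rw [h1, LinearMap.comp_assoc, comul_mul'_eq, counit_mul'_eq]
  have h2 : TensorProduct.map (S) LinearMap.id = (S).rTensor H := rfl
  rw [h2]
  calc ((μ) ∘ₗ (S).rTensor H) ∘ₗ Coalgebra.comul ∘ₗ (μ)
      = ((μ) ∘ₗ (S).rTensor H ∘ₗ Coalgebra.comul) ∘ₗ (μ) := by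
        simp only [LinearMap.comp_assoc]
    _ = (Algebra.linearMap k H ∘ₗ Coalgebra.counit) ∘ₗ (μ) := by
        rw [HopfAlgebra.mul_antipode_rTensor_comul]
    _ = Algebra.linearMap k H ∘ₗ Coalgebra.counit ∘ₗ (μ) := by
        simp only [LinearMap.comp_assoc]

lemma conv_mu_right :
    conv (C := H ⊗[k] H) (LinearMap.mul' k H)
        (LinearMap.mul' k H ∘ₗ TensorProduct.map (HopfAlgebra.antipode (R := k))
          (HopfAlgebra.antipode (R := k)) ∘ₗ (TensorProduct.comm k H H).toLinearMap)
      = Algebra.linearMap k H ∘ₗ Coalgebra.counit := by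
  refine TensorProduct.ext' fun a b => ?_
  have ra := ℛ k a
  have rb := ℛ k b
  have hcom : Coalgebra.comul (R := k) (a ⊗ₜ[k] b) =
      ∑ i ∈ (ℛ k a).index, ∑ j ∈ (ℛ k b).index,
        ((ℛ k a).left i ⊗ₜ[k] (ℛ k b).left j) ⊗ₜ[k]
          ((ℛ k a).right i ⊗ₜ[k] (ℛ k b).right j) := by
    simp only [TensorProduct.comul_tmul, LinearMap.comp_apply,
      TensorProduct.map_tmul, ← (ℛ k a).eq, ← (ℛ k b).eq]
    rw [TensorProduct.sum_tmul]
    rw [map_sum]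
    refine Finset.sum_congr rfl fun i _ => ?_
    rw [TensorProduct.tmul_sum, map_sum]
    refine Finset.sum_congr rfl fun j _ => ?_
    simp
  simp only [conv, LinearMap.comp_apply, hcom, map_sum, TensorProduct.map_tmul,
    LinearMap.mul'_apply, TensorProduct.comm_tmul, LinearEquiv.coe_coe]
  have hin : ∀ i ∈ (ℛ k a).index,
      ∑ j ∈ (ℛ k b).index,
        ((ℛ k a).left i * (ℛ k b).left j) *
          ((S) ((ℛ k b).right j) * (S) ((ℛ k a).right i))
      = (ℛ k a).left i * (algebraMap k H (Coalgebra.counit (R := k) b)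
          * (S) ((ℛ k a).right i)) := by
    intro i _
    rw [← HopfAlgebra.sum_mul_antipode_eq_algebraMap_counit (ℛ k b), Finset.sum_mul, Finset.mul_sum]
    refine Finset.sum_congr rfl fun j _ => ?_
    simp [mul_assoc]
  rw [Finset.sum_congr rfl hin]
  have : ∀ i ∈ (ℛ k a).index,
      (ℛ k a).left i * (algebraMap k H (Coalgebra.counit (R := k) b)
          * (S) ((ℛ k a).right i))
      = algebraMap k H (Coalgebra.counit (R := k) b) *
          ((ℛ k a).left i * (S) ((ℛ k a).right i)) := by
    intro i _
    rw [← mul_assoc, ← Algebra.commutes, mul_assoc]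
  rw [Finset.sum_congr rfl this, ← Finset.mul_sum, HopfAlgebra.sum_mul_antipode_eq_algebraMap_counit (ℛ k a)]
  simp only [TensorProduct.counit_tmul, LinearMap.comp_apply,
    TensorProduct.map_tmul, LinearMap.mul'_apply, Algebra.linearMap_apply, ← map_mul]
  rw [smul_eq_mul]

lemma antipode_mul_anti :
    (HopfAlgebra.antipode (R := k) (A := H)) ∘ₗ LinearMap.mul' k H
      = LinearMap.mul' k H ∘ₗ TensorProduct.map (HopfAlgebra.antipode (R := k))
          (HopfAlgebra.antipode (R := k)) ∘ₗ (TensorProduct.comm k H H).toLinearMap := by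
  have h1 := conv_mu_left (k := k) (H := H)
  have h2 := conv_mu_right (k := k) (H := H)
  calc (S) ∘ₗ (μ)
      = conv ((S) ∘ₗ (μ)) (Algebra.linearMap k H ∘ₗ Coalgebra.counit) :=
        (conv_unit_right _).symm
    _ = conv ((S) ∘ₗ (μ)) (conv (μ) ((μ) ∘ₗ TensorProduct.map (S) (S)
          ∘ₗ (TensorProduct.comm k H H).toLinearMap)) := by rw [h2]
    _ = conv (conv ((S) ∘ₗ (μ)) (μ)) ((μ) ∘ₗ TensorProduct.map (S) (S)
          ∘ₗ (TensorProduct.comm k H H).toLinearMap) := (conv_assoc _ _ _).symm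
    _ = conv (Algebra.linearMap k H ∘ₗ Coalgebra.counit) ((μ) ∘ₗ TensorProduct.map (S) (S)
          ∘ₗ (TensorProduct.comm k H H).toLinearMap) := by rw [h1]
    _ = (μ) ∘ₗ TensorProduct.map (S) (S) ∘ₗ (TensorProduct.comm k H H).toLinearMap :=
        conv_unit_left _

lemma antipode_mul (x y : H) :
    HopfAlgebra.antipode (R := k) (x * y)
      = HopfAlgebra.antipode (R := k) y * HopfAlgebra.antipode (R := k) x := by
  simpa using LinearMap.congr_fun (antipode_mul_anti (k := k) (H := H)) (x ⊗ₜ[k] y)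

lemma antipode_one : HopfAlgebra.antipode (R := k) (1 : H) = 1 := by
  have := HopfAlgebra.mul_antipode_rTensor_comul_apply (R := k) (a := (1 : H))
  simpa [Algebra.TensorProduct.one_def] using this

variable (Sinv : H →ₗ[k] H)

lemma Sinv_one (hSinv1 : Sinv ∘ₗ HopfAlgebra.antipode (R := k) = LinearMap.id) :
    Sinv 1 = 1 := by
  have h := LinearMap.congr_fun hSinv1 (1 : H)
  simpa [antipode_one] using h

lemma Sinv_mul_comul
    (hSinv1 : Sinv ∘ₗ HopfAlgebra.antipode (R := k) = LinearMap.id)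
    (hSinv2 : HopfAlgebra.antipode (R := k) ∘ₗ Sinv = LinearMap.id)
    (h : H) (r : Coalgebra.Repr k h (H × H)) :
    ∑ i ∈ r.index, Sinv (r.right i) * r.left i
      = algebraMap k H (Coalgebra.counit (R := k) h) := by
  have hS : Function.Injective (HopfAlgebra.antipode (R := k) (A := H)) := by
    intro x y hxy
    have hx := LinearMap.congr_fun hSinv1 x
    have hy := LinearMap.congr_fun hSinv1 y
    simp only [LinearMap.comp_apply, LinearMap.id_apply] at hx hy
    rw [← hx, ← hy, hxy]
  apply hS
  rw [map_sum]
  have heach : ∀ i ∈ r.index,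
      HopfAlgebra.antipode (R := k) (Sinv (r.right i) * r.left i)
        = HopfAlgebra.antipode (R := k) (r.left i) * r.right i := by
    intro i _
    rw [antipode_mul]
    congr 1
    simpa using LinearMap.congr_fun hSinv2 (r.right i)
  rw [Finset.sum_congr rfl heach, HopfAlgebra.sum_antipode_mul_eq_algebraMap_counit r]
  rw [Algebra.algebraMap_eq_smul_one, map_smul, antipode_one,
    ← Algebra.algebraMap_eq_smul_one]

end TensorCoalg


/-- The map `u ⊗ h ↦ (1 ⊗ S⁻¹h) * u`. -/
def twistMul (k : Type) [Field k] (H : Type) [Ring H] [HopfAlgebra k H]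
    (P : Type) [Ring P] [Algebra k P] (Sinv : H →ₗ[k] H) :
    (P ⊗[k] H) ⊗[k] H →ₗ[k] P ⊗[k] H :=
  TensorProduct.lift (LinearMap.mk₂ k (fun u h => ((1 : P) ⊗ₜ[k] Sinv h) * u)
    (fun u u' h => mul_add _ _ _)
    (fun c u h => mul_smul_comm c _ _)
    (fun u h h' => by simp only [map_add, TensorProduct.tmul_add, add_mul])
    (fun c u h => by simp only [map_smul, TensorProduct.tmul_smul, smul_mul_assoc]))

end Statement13Aux

variable (k : Type) [Field k] (H : Type) [Ring H] [HopfAlgebra k H]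
-- `P` is a `k`-algebra and `B` (the coinvariants) is a commutative `k`-algebra
-- mapping centrally into `P` (`Algebra B P` encodes that `B` is central in `P`)
variable (P : Type) [Ring P] [Algebra k P]
variable (B : Type) [CommRing B] [Algebra k B] [Algebra B P] [IsScalarTower k B P]

theorem statement13
    (Sinv : H →ₗ[k] H)
    (hSinv1 : Sinv ∘ₗ HopfAlgebra.antipode (R := k) = LinearMap.id)
    (hSinv2 : HopfAlgebra.antipode (R := k) ∘ₗ Sinv = LinearMap.id)
    -- `ρ` makes `P` a right `H`-comodule algebra
    (ρ : P →ₐ[k] P ⊗[k] H)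
    (hcoassoc : map ρ.toLinearMap LinearMap.id ∘ₗ ρ.toLinearMap =
      (TensorProduct.assoc k P H H).symm.toLinearMap
        ∘ₗ map LinearMap.id comul ∘ₗ ρ.toLinearMap)
    (hcounit : (TensorProduct.rid k P).toLinearMap
        ∘ₗ map LinearMap.id (counit (R := k) (A := H)) ∘ₗ ρ.toLinearMap
      = LinearMap.id)
    -- `B` is (isomorphic to) the coinvariant subalgebra of `P`
    (hinj : Function.Injective (algebraMap B P))
    (hB : ∀ p : P, ρ p = p ⊗ₜ[k] (1 : H) ↔ p ∈ Set.range (algebraMap B P))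
    -- the extension `B ⊆ P` is Hopf-Galois: the canonical map is bijective
    (can : P ⊗[B] P →ₗ[B] P ⊗[k] H)
    (hcan : ∀ p p' : P, can (p ⊗ₜ[B] p') = (p ⊗ₜ[k] (1 : H)) * ρ p')
    (hbij : Function.Bijective can)
    -- the action `p·h = (S⁻¹h)⁽²⁾ p (S⁻¹h)⁽¹⁾`, where
    -- `T(S⁻¹h) = (S⁻¹h)⁽¹⁾ ⊗_B (S⁻¹h)⁽²⁾ = can⁻¹(1 ⊗ S⁻¹h)`
    (act : P ⊗[k] H →ₗ[k] P)
    (hact : ∀ (p : P) (h : H) (t : P ⊗[B] P),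
      can t = (1 : P) ⊗ₜ[k] Sinv h → act (p ⊗ₜ[k] h) = sandwichMap P B p t) :
    -- `P` is stable: `p⁽⁰⁾·p⁽¹⁾ = p`
    act ∘ₗ ρ.toLinearMap = LinearMap.id := by
  classical
  let canE : (P ⊗[B] P) ≃ₗ[B] (P ⊗[k] H) := LinearEquiv.ofBijective can hbij
  have hcanE : ∀ t, canE t = can t := fun t => rfl
  let G₂ : (P ⊗[k] H) ⊗[k] H →ₗ[k] P ⊗[k] H := Statement13Aux.twistMul k H P Sinv
  have hG₂ : ∀ (u : P ⊗[k] H) (h : H), G₂ (u ⊗ₜ[k] h) = ((1 : P) ⊗ₜ[k] Sinv h) * u :=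
    fun u h => rfl
  let m' : P ⊗[B] P →ₗ[B] P := sandwichMap P B 1
  have hmul : ∀ (t : P ⊗[B] P) (q : P), can (t * ((1 : P) ⊗ₜ[B] q)) = can t * ρ q := by
    intro t q
    induction t using TensorProduct.induction_on with
    | zero => simp
    | tmul x y =>
      rw [Algebra.TensorProduct.tmul_mul_tmul, mul_one, hcan, hcan, map_mul, mul_assoc]
    | add u v hu hv => rw [add_mul, map_add, map_add, add_mul, hu, hv]
  have hsand : ∀ (q : P) (t : P ⊗[B] P),
      sandwichMap P B q t = m' (t * ((1 : P) ⊗ₜ[B] q)) := by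
    intro q t
    induction t using TensorProduct.induction_on with
    | zero => simp
    | tmul x y =>
      rw [Algebra.TensorProduct.tmul_mul_tmul, mul_one]
      show y * (q * x) = (y * q) * ((1 : P) * x)
      rw [one_mul, mul_assoc]
    | add u v hu hv => rw [add_mul, map_add, map_add, hu, hv]
  have hact' : ∀ (q : P) (h : H),
      act (q ⊗ₜ[k] h) = m' (canE.symm (((1 : P) ⊗ₜ[k] Sinv h) * ρ q)) := by
    intro q h
    have ht : can (canE.symm ((1 : P) ⊗ₜ[k] Sinv h)) = (1 : P) ⊗ₜ[k] Sinv h := by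
      rw [← hcanE]; exact canE.apply_symm_apply _
    rw [hact q h _ ht, hsand]
    congr 1
    apply canE.injective
    rw [hcanE _, hcanE _, hmul, ht, ← hcanE, canE.apply_symm_apply]
  have hstep : ∀ u : P ⊗[k] H,
      act u = m' (canE.symm (G₂ ((TensorProduct.map ρ.toLinearMap LinearMap.id) u))) := by
    intro u
    induction u using TensorProduct.induction_on with
    | zero => simp
    | tmul q h =>
      rw [hact']
      have hx : (TensorProduct.map ρ.toLinearMap LinearMap.id) (q ⊗ₜ[k] h)
          = ρ q ⊗ₜ[k] h := by simp
      rw [hx, hG₂]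
    | add u v hu hv => simp only [map_add, hu, hv]
  have haux : ∀ (q : P) (y : H ⊗[k] H),
      G₂ ((TensorProduct.assoc k P H H).symm (q ⊗ₜ[k] y))
        = q ⊗ₜ[k] (LinearMap.mul' k H (TensorProduct.map Sinv LinearMap.id
            ((TensorProduct.comm k H H) y))) := by
    intro q y
    induction y using TensorProduct.induction_on with
    | zero => simp
    | tmul a b =>
      rw [TensorProduct.assoc_symm_tmul, hG₂, Algebra.TensorProduct.tmul_mul_tmul, one_mul]
      simp
    | add y1 y2 h1 h2 => simp only [TensorProduct.tmul_add, map_add, h1, h2]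
  have hlam : ∀ h : H,
      LinearMap.mul' k H (TensorProduct.map Sinv LinearMap.id
          ((TensorProduct.comm k H H) (Coalgebra.comul (R := k) h)))
        = algebraMap k H (Coalgebra.counit (R := k) h) := by
    intro h
    rw [← (ℛ k h).eq, map_sum, map_sum, map_sum]
    simp only [TensorProduct.comm_tmul, TensorProduct.map_tmul, LinearMap.mul'_apply,
      LinearMap.id_coe, id_eq]
    exact Statement13Aux.Sinv_mul_comul Sinv hSinv1 hSinv2 h (ℛ k h)
  have hKey : ∀ u : P ⊗[k] H,
      G₂ ((TensorProduct.assoc k P H H).symm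
          ((TensorProduct.map LinearMap.id (Coalgebra.comul (R := k) (A := H))) u))
        = (TensorProduct.map LinearMap.id
            (Algebra.linearMap k H ∘ₗ Coalgebra.counit (R := k) (A := H))) u := by
    intro u
    induction u using TensorProduct.induction_on with
    | zero => simp
    | tmul q h =>
      rw [TensorProduct.map_tmul, TensorProduct.map_tmul]
      simp only [LinearMap.id_coe, id_eq]
      rw [haux, hlam]
      simp
    | add u v hu hv => simp only [map_add, hu, hv]
  apply LinearMap.ext
  intro p
  rw [LinearMap.comp_apply, LinearMap.id_apply, AlgHom.toLinearMap_apply]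
  rw [hstep (ρ p)]
  have h1 : (TensorProduct.map ρ.toLinearMap LinearMap.id) (ρ p)
      = (TensorProduct.assoc k P H H).symm
          ((TensorProduct.map LinearMap.id Coalgebra.comul) (ρ p)) := by
    have h0 := LinearMap.congr_fun hcoassoc p
    simpa using h0
  rw [h1, hKey]
  have h2 : (TensorProduct.map LinearMap.id (Coalgebra.counit (R := k) (A := H))) (ρ p)
      = p ⊗ₜ[k] (1 : k) := by
    have h0 := LinearMap.congr_fun hcounit p
    simp only [LinearMap.comp_apply, LinearMap.id_apply, LinearEquiv.coe_coe,
      AlgHom.toLinearMap_apply] at h0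
    have h5 := congrArg (TensorProduct.rid k P).symm h0
    rw [LinearEquiv.symm_apply_apply] at h5
    rw [h5, TensorProduct.rid_symm_apply]
  have h3 : (TensorProduct.map LinearMap.id (Algebra.linearMap k H
        ∘ₗ Coalgebra.counit (R := k) (A := H))) (ρ p) = p ⊗ₜ[k] (1 : H) := by
    have hsplit : TensorProduct.map (LinearMap.id (M := P))
        (Algebra.linearMap k H ∘ₗ Coalgebra.counit (R := k) (A := H))
        = TensorProduct.map LinearMap.id (Algebra.linearMap k H)
            ∘ₗ TensorProduct.map LinearMap.id Coalgebra.counit := by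
      rw [← TensorProduct.map_comp, LinearMap.id_comp]
    rw [hsplit, LinearMap.comp_apply, h2, TensorProduct.map_tmul]
    simp
  rw [h3]
  have h4 : canE.symm (p ⊗ₜ[k] (1 : H)) = p ⊗ₜ[B] (1 : P) := by
    rw [LinearEquiv.symm_apply_eq, hcanE, hcan]
    simp
  rw [h4]
  simp [m', sandwichMap]
end
end
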